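/- Assume (AU) with bound N, let ((l, s), v) be a soliton of u at level v (case C1), and set k = v. Let Φ¹ satisfy the γ-fundamental relations at l and Φ² satisfy the δ-fundamental relations at (l, s), normalized so that Φ¹ i = 0 and Φ² i = 0 for all i ≥ N. Then Φ¹ i = Φ² (i+1) for all i ∈ ℤ, the backward constraint holds for (Φ¹, Φ²), and the forward constraint with parameter μ = 0 holds for (Φ¹, Φ²); that is, the fundamental eigenpair solves the full ultradiscrete Lax system in case C1. -/

import Mathlib

/-- `γ i = min (u i) (1 - u (i-1))`. -/
noncomputable def gam (u : ℤ → ℝ) (i : ℤ) : ℝ := min (u i) (1 - u (i - 1))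

/-- `δ i = min (u (i-1)) (1 - u i)`. -/
noncomputable def del (u : ℤ → ℝ) (i : ℤ) : ℝ := min (u (i - 1)) (1 - u i)

/-- A soliton of `u` at level `v` (case C1). -/
def SolitonC1 (u : ℤ → ℝ) (l : ℤ) (s : ℕ) (v : ℝ) : Prop :=
  1 ≤ s ∧ (∀ i : ℤ, u i + u (i + 1) ≤ v) ∧ v ≤ 1 ∧
  (∀ i : ℤ, l ≤ i → i ≤ l + (s : ℤ) - 1 → u i + u (i + 1) = v) ∧
  u (l - 1) + u l < v ∧ u (l + (s : ℤ)) + u (l + (s : ℤ) + 1) < v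

/-- A soliton of `u` (case C2). -/
def SolitonC2 (u : ℤ → ℝ) (l : ℤ) (s : ℕ) : Prop :=
  1 ≤ s ∧ (∀ i : ℤ, l ≤ i → i ≤ l + (s : ℤ) - 1 → 1 ≤ u i + u (i + 1)) ∧
  u (l - 1) + u l < 1 ∧ u (l + (s : ℤ)) + u (l + (s : ℤ) + 1) < 1

/-- `Φ` satisfies the γ-fundamental relations at `l`. -/
def FundG (u : ℤ → ℝ) (k : ℝ) (l : ℤ) (Φ : ℤ → ℝ) : Prop :=
  (∀ i : ℤ, i ≤ l → Φ i - Φ (i + 1) = gam u i - k) ∧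
  (∀ i : ℤ, l ≤ i → Φ (i + 1) - Φ i = gam u (i + 1))

/-- `Φ` satisfies the δ-fundamental relations at `(l, s)`. -/
def FundD (u : ℤ → ℝ) (k : ℝ) (l : ℤ) (s : ℕ) (Φ : ℤ → ℝ) : Prop :=
  (∀ i : ℤ, i ≤ l + (s : ℤ) - 1 → Φ i - Φ (i + 1) = del u i - k) ∧
  (∀ i : ℤ, l + (s : ℤ) ≤ i → Φ (i + 1) - Φ i = del u (i + 1))

/-- The backward constraint for `(Φ¹, Φ²)`. -/
def Backward (u Φ1 Φ2 : ℤ → ℝ) : Prop :=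
  ∀ i : ℤ, Φ1 i = max (Φ2 (i + 1)) (Φ1 (i + 1) + u i - 1)

/-- The forward constraint with parameter `μ` for `(Φ¹, Φ²)`. -/
def Forward (u : ℤ → ℝ) (k μ : ℝ) (Φ1 Φ2 : ℤ → ℝ) : Prop :=
  ∀ i : ℤ, Φ2 (i + 1) = max (Φ1 i - μ) (Φ2 i + u i + k - 1)

/-- In case C1, a normalized fundamental eigenpair satisfies
`Φ¹ i = Φ² (i+1)`, the backward constraint, and the forward constraint with `μ = 0`:
it solves the full ultradiscrete Lax system. -/
theorem stmt_15 (u : ℤ → ℝ) (hu : ∀ i : ℤ, 0 ≤ u i ∧ u i ≤ 1)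
    (N : ℕ) (hN : 0 < N) (hAU : ∀ i : ℤ, ((N : ℤ) ≤ i ∨ i ≤ -(N : ℤ)) → u i = 0)
    (l : ℤ) (s : ℕ) (v : ℝ) (hsol : SolitonC1 u l s v) (k : ℝ) (hk : k = v)
    (Φ1 Φ2 : ℤ → ℝ) (h1 : FundG u k l Φ1) (h2 : FundD u k l s Φ2)
    (hnorm : ∀ i : ℤ, (N : ℤ) ≤ i → Φ1 i = 0 ∧ Φ2 i = 0) :
    (∀ i : ℤ, Φ1 i = Φ2 (i + 1)) ∧ Backward u Φ1 Φ2 ∧ Forward u k 0 Φ1 Φ2 := by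
  obtain ⟨hs, hle, hv1, heqs, _, _⟩ := hsol
  subst hk
  have hg : ∀ i : ℤ, gam u i = u i := by
    intro i
    have h := hle (i - 1)
    have e : i - 1 + 1 = i := by ring
    rw [e] at h
    exact min_eq_left (by linarith)
  have hdel : ∀ i : ℤ, del u i = u (i - 1) := by
    intro i
    have h := hle (i - 1)
    have e : i - 1 + 1 = i := by ring
    rw [e] at h
    exact min_eq_left (by linarith)
  have hd1 : ∀ i : ℤ, i ≤ l + (s : ℤ) - 1 → Φ1 i - Φ1 (i + 1) = u i - k := by
    intro i hi
    rcases le_or_gt i l with h | h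
    · have h' := h1.1 i h; rw [hg] at h'; exact h'
    · have hli : l ≤ i := le_of_lt h
      have ha := h1.2 i hli; rw [hg] at ha
      have he := heqs i hli hi
      linarith
  have hd1' : ∀ i : ℤ, l ≤ i → Φ1 (i + 1) - Φ1 i = u (i + 1) := by
    intro i hi; have h' := h1.2 i hi; rw [hg] at h'; exact h'
  have hd2 : ∀ i : ℤ, i ≤ l + (s : ℤ) - 1 → Φ2 i - Φ2 (i + 1) = u (i - 1) - k := by
    intro i hi; have h' := h2.1 i hi; rw [hdel] at h'; exact h'
  have hd2' : ∀ i : ℤ, l + (s : ℤ) ≤ i → Φ2 (i + 1) - Φ2 i = u i := by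
    intro i hi
    have h' := h2.2 i hi; rw [hdel] at h'
    have e : i + 1 - 1 = i := by ring
    rw [e] at h'; exact h'
  have hdiff : ∀ i : ℤ, Φ1 (i + 1) - Φ2 (i + 1 + 1) = Φ1 i - Φ2 (i + 1) := by
    intro i
    rcases le_or_gt i (l - 1) with h | h
    · have ha := hd1 i (by omega)
      have hb := hd2 (i + 1) (by omega)
      have e : i + 1 - 1 = i := by ring
      rw [e] at hb
      linarith
    · have hli : l ≤ i := by omega
      have ha := hd1' i hli
      rcases le_or_gt (i + 1) (l + (s : ℤ) - 1) with h' | h'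
      · have hb := hd2 (i + 1) h'
        have e : i + 1 - 1 = i := by ring
        rw [e] at hb
        have he := heqs i hli (by omega)
        linarith
      · have hb := hd2' (i + 1) (by omega)
        linarith
  have hall : ∀ i : ℤ, Φ1 i - Φ2 (i + 1) = Φ1 0 - Φ2 1 := by
    intro i
    induction i using Int.induction_on with
    | zero => norm_num
    | succ n ih =>
      have h := hdiff (n : ℤ)
      push_cast
      push_cast at ih h
      linarith
    | pred n ih =>
      have h := hdiff (-(n : ℤ) - 1)
      have e : -(n : ℤ) - 1 + 1 = -(n : ℤ) := by ring
      rw [e] at h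
      push_cast
      push_cast at ih h
      have e2 : -((n : ℤ) + 1) + 1 = -(n : ℤ) - 1 + 1 := by ring
      have e3 : (-(n : ℤ) - 1) + 1 = -(n : ℤ) := by ring
      -- unify terms
      have goal_eq : Φ1 (-(n : ℤ) - 1) - Φ2 (-(n : ℤ)) = Φ1 0 - Φ2 1 := by linarith
      convert goal_eq using 3 <;> ring
  have hz : Φ1 0 - Φ2 1 = 0 := by
    have a := (hnorm (N : ℤ) le_rfl).1
    have b := (hnorm ((N : ℤ) + 1) (by omega)).2
    have h := hall (N : ℤ)
    linarith
  have key : ∀ i : ℤ, Φ1 i = Φ2 (i + 1) := by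
    intro i
    have h := hall i
    linarith
  refine ⟨key, ?_, ?_⟩
  · intro i
    rw [← key i]
    rcases le_or_gt i (l + (s : ℤ) - 1) with h | h
    · have ha := hd1 i h
      have := hle i
      exact (max_eq_left (by linarith)).symm
    · have hli : l ≤ i := by omega
      have ha := hd1' i hli
      have := hle i
      exact (max_eq_left (by linarith)).symm
  · intro i
    rw [← key i, sub_zero]
    rcases le_or_gt i (l + (s : ℤ) - 1) with h | h
    · have ha := hd2 i h
      have hb := hle (i - 1)
      have e : i - 1 + 1 = i := by ring
      rw [e] at hb
      have hk := key i
      exact (max_eq_left (by linarith)).symm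
    · have ha := hd2' i (by omega)
      have hk := key i
      exact (max_eq_left (by linarith)).symm
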